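/- Let n ≥ 2 and d ≥ 1 be integers and let A_0, A_α, A_{αα} (1 ≤ α ≤ d) be real numbers. If Q(x) = A_0 + Σ_{α=1}^d A_α s_α(x) + Σ_{α=1}^d A_{αα} s_{αα}(x) ≥ 0 for all x ∈ K_n^d, then P_Q(X,Y) + A_0/(n − 1) ≥ 0 for all X, Y ∈ ℝ^d with ‖Y‖² + ‖X‖²/n ≤ 1, where P_Q(X,Y) = A_0 + √n Σ_{α=1}^d A_α X_α + (n − 1) Σ_{α=1}^d A_{αα} X_α² − n Σ_{α=1}^d A_{αα} Y_α². -/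

import Mathlib

open scoped BigOperators

/-- `sLin n d α x = ∑ i, ξ_{i,α}` -/
noncomputable def sLin (n d : ℕ) (α : Fin d) (x : Fin n → Fin d → ℝ) : ℝ :=
  ∑ i, x i α

/-- `sQuad n d α x = ∑_{i ≠ j} ξ_{i,α} ξ_{j,α}` (sum over ordered pairs). -/
noncomputable def sQuad (n d : ℕ) (α : Fin d) (x : Fin n → Fin d → ℝ) : ℝ :=
  ∑ i, ∑ j, if i = j then 0 else x i α * x j α

/-- `Qpoly n d A0 A B x = A0 + ∑ α A_α s_α(x) + ∑ α A_{αα} s_{αα}(x)` -/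
noncomputable def Qpoly (n d : ℕ) (A0 : ℝ) (A B : Fin d → ℝ)
    (x : Fin n → Fin d → ℝ) : ℝ :=
  A0 + ∑ α, A α * sLin n d α x + ∑ α, B α * sQuad n d α x

/-- `PQ n d A0 A B X Y = A0 + √n ∑ A_α X_α + (n-1) ∑ A_{αα} X_α² - n ∑ A_{αα} Y_α²` -/
noncomputable def PQ (n d : ℕ) (A0 : ℝ) (A B : Fin d → ℝ) (X Y : Fin d → ℝ) : ℝ :=
  A0 + Real.sqrt n * ∑ α, A α * X α
    + ((n : ℝ) - 1) * ∑ α, B α * (X α) ^ 2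
    - n * ∑ α, B α * (Y α) ^ 2

lemma sum_piecewise (n p q : ℕ) (hpq : p ≤ q) (hqn : q ≤ n) (a b c : ℝ) :
    ∑ i : Fin n, (if (i : ℕ) < p then a else if (i : ℕ) < q then b else c)
      = (p : ℝ) * a + ((q - p : ℕ) : ℝ) * b + ((n - q : ℕ) : ℝ) * c := by
  rw [Fin.sum_univ_eq_sum_range (fun j => if j < p then a else if j < q then b else c)]
  rw [Finset.range_eq_Ico, ← Finset.sum_Ico_consecutive _ (Nat.zero_le q) hqn,
      ← Finset.sum_Ico_consecutive _ (Nat.zero_le p) hpq]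
  have h1 : ∑ j ∈ Finset.Ico 0 p, (if j < p then a else if j < q then b else c) = p * a := by
    rw [Finset.sum_congr rfl (fun j hj => ?_), Finset.sum_const, Nat.card_Ico, Nat.sub_zero,
      nsmul_eq_mul]
    simp only [Finset.mem_Ico] at hj
    simp [hj.2]
  have h2 : ∑ j ∈ Finset.Ico p q, (if j < p then a else if j < q then b else c)
      = ((q - p : ℕ) : ℝ) * b := by
    rw [Finset.sum_congr rfl (fun j hj => ?_), Finset.sum_const, Nat.card_Ico, nsmul_eq_mul]
    simp only [Finset.mem_Ico] at hj
    simp [Nat.not_lt.mpr hj.1, hj.2]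
  have h3 : ∑ j ∈ Finset.Ico q n, (if j < p then a else if j < q then b else c)
      = ((n - q : ℕ) : ℝ) * c := by
    rw [Finset.sum_congr rfl (fun j hj => ?_), Finset.sum_const, Nat.card_Ico, nsmul_eq_mul]
    simp only [Finset.mem_Ico] at hj
    simp [Nat.not_lt.mpr hj.1, Nat.not_lt.mpr (hpq.trans hj.1)]
  rw [h1, h2, h3]

lemma sQuad_eq (n d : ℕ) (α : Fin d) (x : Fin n → Fin d → ℝ) :
    sQuad n d α x = (∑ i, x i α)^2 - ∑ i, (x i α)^2 := by
  have h : ∀ i : Fin n, (∑ j, if i = j then (0:ℝ) else x i α * x j α)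
      = x i α * (∑ j, x j α) - (x i α)^2 := by
    intro i
    have : (fun j => if i = j then (0:ℝ) else x i α * x j α)
        = fun j => x i α * x j α - (if i = j then x i α * x j α else 0) := by
      funext j; split_ifs <;> ring
    rw [this, Finset.sum_sub_distrib, ← Finset.mul_sum, Finset.sum_ite_eq]
    simp [sq]
  unfold sQuad
  rw [Finset.sum_congr rfl (fun i _ => h i), Finset.sum_sub_distrib, ← Finset.sum_mul, sq]

lemma eval_config (n d : ℕ) (hn : 2 ≤ n) (A0 : ℝ) (A B : Fin d → ℝ)
    (X Y v : Fin d → ℝ) (hv : ∀ α, (v α)^2 = (Y α)^2)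
    (lam : ℝ) (γ : Fin n → ℝ) (hγ : ∑ i, γ i = 0) :
    Qpoly n d A0 A B (fun i α => lam * X α / Real.sqrt (n:ℝ) + γ i * v α)
      = A0 + lam * (Real.sqrt (n:ℝ) * ∑ α, A α * X α)
        + lam^2 * (((n:ℝ) - 1) * ∑ α, B α * (X α)^2)
        - (∑ i, (γ i)^2) * ∑ α, B α * (Y α)^2 := by
  have hnpos : (0:ℝ) < (n:ℝ) := by positivity
  have hs2 : Real.sqrt (n:ℝ) ^ 2 = (n:ℝ) := Real.sq_sqrt (le_of_lt hnpos)
  have hspos : (0:ℝ) < Real.sqrt (n:ℝ) := Real.sqrt_pos.mpr hnpos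
  have hsne : Real.sqrt (n:ℝ) ≠ 0 := ne_of_gt hspos
  have hlin : ∀ α, sLin n d α (fun i α => lam * X α / Real.sqrt (n:ℝ) + γ i * v α)
      = lam * Real.sqrt (n:ℝ) * X α := by
    intro α
    unfold sLin
    rw [Finset.sum_add_distrib, Finset.sum_const, ← Finset.sum_mul, hγ, Finset.card_univ,
      Fintype.card_fin, nsmul_eq_mul, zero_mul, add_zero]
    field_simp
    linear_combination (-(lam * X α)) * hs2
  have hsq : ∀ α, (∑ i, (lam * X α / Real.sqrt (n:ℝ) + γ i * v α)^2)
      = lam^2 * (X α)^2 + (∑ i, (γ i)^2) * (Y α)^2 := by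
    intro α
    have hexp : ∀ i : Fin n, (lam * X α / Real.sqrt (n:ℝ) + γ i * v α)^2
        = (lam * X α / Real.sqrt (n:ℝ))^2
          + (2 * (lam * X α / Real.sqrt (n:ℝ)) * v α) * γ i + (v α)^2 * (γ i)^2 := by
      intro i; ring
    rw [Finset.sum_congr rfl (fun i _ => hexp i)]
    rw [Finset.sum_add_distrib, Finset.sum_add_distrib, Finset.sum_const, ← Finset.mul_sum,
      ← Finset.mul_sum, hγ, Finset.card_univ, Fintype.card_fin, nsmul_eq_mul, hv α]
    rw [div_pow, mul_pow, hs2]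
    field_simp
    ring
  have hquad : ∀ α, sQuad n d α (fun i α => lam * X α / Real.sqrt (n:ℝ) + γ i * v α)
      = lam^2 * ((n:ℝ) - 1) * (X α)^2 - (∑ i, (γ i)^2) * (Y α)^2 := by
    intro α
    rw [sQuad_eq]
    have h := hlin α
    unfold sLin at h
    rw [h, hsq α, mul_pow, mul_pow, hs2]
    ring
  unfold Qpoly
  simp only [hlin, hquad]
  have h1 : ∑ α, A α * (lam * Real.sqrt (n:ℝ) * X α)
      = ∑ α, (lam * Real.sqrt (n:ℝ)) * (A α * X α) :=
    Finset.sum_congr rfl (fun α _ => by ring)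
  have h2 : ∑ α, B α * (lam^2 * ((n:ℝ) - 1) * (X α)^2 - (∑ i, (γ i)^2) * (Y α)^2)
      = ∑ α, ((lam^2 * ((n:ℝ) - 1)) * (B α * (X α)^2)
          - (∑ i, (γ i)^2) * (B α * (Y α)^2)) :=
    Finset.sum_congr rfl (fun α _ => by ring)
  rw [h1, h2, Finset.sum_sub_distrib, ← Finset.mul_sum, ← Finset.mul_sum, ← Finset.mul_sum]
  ring

lemma norm_config (n d : ℕ) (hn : 2 ≤ n) (X Y v : Fin d → ℝ)
    (hv : ∀ α, (v α)^2 = (Y α)^2) (hxv : ∀ α, X α * v α = -|X α * Y α|)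
    (lam g : ℝ) :
    ∑ α, (lam * X α / Real.sqrt (n:ℝ) + g * v α)^2
      = lam^2 * (∑ α, (X α)^2) / (n:ℝ)
        - 2 * lam * g * (∑ α, |X α * Y α|) / Real.sqrt (n:ℝ)
        + g^2 * (∑ α, (Y α)^2) := by
  have hnpos : (0:ℝ) < (n:ℝ) := by positivity
  have hs2 : Real.sqrt (n:ℝ) ^ 2 = (n:ℝ) := Real.sq_sqrt (le_of_lt hnpos)
  have hsne : Real.sqrt (n:ℝ) ≠ 0 := ne_of_gt (Real.sqrt_pos.mpr hnpos)
  have hexp : ∀ α, (lam * X α / Real.sqrt (n:ℝ) + g * v α)^2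
      = lam^2 * (X α)^2 / (n:ℝ)
        - 2 * lam * g * |X α * Y α| / Real.sqrt (n:ℝ) + g^2 * (Y α)^2 := by
    intro α
    have h1 : (lam * X α / Real.sqrt (n:ℝ) + g * v α)^2
        = (lam / Real.sqrt (n:ℝ))^2 * (X α)^2
          + 2 * lam * g * (X α * v α) / Real.sqrt (n:ℝ) + g^2 * (v α)^2 := by
      ring
    rw [h1, hxv α, hv α, div_pow, hs2]
    ring
  rw [Finset.sum_congr rfl (fun α _ => hexp α)]
  have e1 : ∑ α, lam^2 * (X α)^2 / (n:ℝ) = lam^2 * (∑ α, (X α)^2) / (n:ℝ) := by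
    rw [← Finset.sum_div, ← Finset.mul_sum]
  have e2 : ∑ α, 2 * lam * g * |X α * Y α| / Real.sqrt (n:ℝ)
      = 2 * lam * g * (∑ α, |X α * Y α|) / Real.sqrt (n:ℝ) := by
    rw [← Finset.sum_div, ← Finset.mul_sum]
  have e3 : ∑ α, g^2 * (Y α)^2 = g^2 * ∑ α, (Y α)^2 := (Finset.mul_sum _ _ _).symm
  rw [Finset.sum_add_distrib, Finset.sum_sub_distrib, e1, e2, e3]

set_option maxHeartbeats 1000000 in
lemma aux_config (n : ℕ) (hn : 2 ≤ n) (a2 b2 cq : ℝ)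
    (hb2pos : 0 < b2) (ha20 : 0 ≤ a2) (hab : a2 + b2 ≤ 1) (hcq0 : 0 ≤ cq)
    (hcs : cq^2 ≤ a2 * b2) :
    ∃ m1 m2 : ℝ, ∃ p : ℕ, p ≤ n - 1 ∧ m1 ≤ m2 ∧
      m1 ≤ -((p:ℝ)*m1 + ((n:ℝ)-1-(p:ℝ))*m2) ∧
      -((p:ℝ)*m1 + ((n:ℝ)-1-(p:ℝ))*m2) ≤ m2 ∧
      (∀ g, m1 ≤ g → g ≤ m2 → a2 - 2*g*cq + g^2*b2 ≤ 1) ∧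
      (n:ℝ) - ((p:ℝ)*m1^2 + ((n:ℝ)-1-(p:ℝ))*m2^2
        + (-((p:ℝ)*m1 + ((n:ℝ)-1-(p:ℝ))*m2))^2) ≤ 1/b2 := by
  have hN2 : (2:ℝ) ≤ (n:ℝ) := by exact_mod_cast hn
  set N : ℝ := (n:ℝ) with hNdef
  set disc : ℝ := cq^2 + b2*(1-a2) with hdiscdef
  have hdisc_ge : b2^2 ≤ disc := by nlinarith
  have hdiscpos : 0 < disc := by nlinarith
  set sd : ℝ := Real.sqrt disc with hsddef
  have hsd2 : sd^2 = disc := Real.sq_sqrt hdiscpos.le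
  have hsdpos : 0 < sd := Real.sqrt_pos.mpr hdiscpos
  have hsd_ge_b2 : b2 ≤ sd := by nlinarith [hsd2, hsdpos, hb2pos]
  have hcq_lt_sd : cq < sd := by nlinarith [hsd2, hsdpos]
  set m1 : ℝ := (cq - sd)/b2 with hm1def
  set m2 : ℝ := (cq + sd)/b2 with hm2def
  have hm1neg : m1 ≤ 0 := by
    rw [hm1def]; apply div_nonpos_of_nonpos_of_nonneg <;> linarith
  have hm2pos : 0 < m2 := by
    rw [hm2def]; positivity
  have hm2m1 : m2 - m1 = 2*sd/b2 := by rw [hm1def, hm2def]; field_simp; ring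
  have hm2m1pos : 0 < m2 - m1 := by rw [hm2m1]; positivity
  have hfact : ∀ g, a2 - 2*g*cq + g^2*b2 - 1 = b2*(g-m1)*(g-m2) := by
    intro g
    rw [hm1def, hm2def]
    field_simp
    linear_combination hsd2
  have he1 : b2 * (m1 * m2) = a2 - 1 := by
    rw [hm1def, hm2def]
    field_simp
    linear_combination (-1) * hsd2
  have he5 : b2^2*(m2-m1)^2 = 4*disc := by
    have h : b2*(m2-m1) = 2*sd := by rw [hm2m1]; field_simp
    calc b2^2*(m2-m1)^2 = (b2*(m2-m1))^2 := by ring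
      _ = (2*sd)^2 := by rw [h]
      _ = 4*disc := by rw [← hsd2]; ring
  -- choice of p
  set F : ℝ := N * m2 / (m2 - m1) with hFdef
  have hF0 : 0 ≤ F := div_nonneg (by positivity) hm2m1pos.le
  set p : ℕ := min (n-1) (Nat.floor F) with hpdef
  have hpn : p ≤ n - 1 := min_le_left _ _
  have hpF : (p:ℝ) ≤ F := by
    have h1 : (p:ℕ) ≤ Nat.floor F := min_le_right _ _
    calc (p:ℝ) ≤ (Nat.floor F : ℝ) := by exact_mod_cast h1
      _ ≤ F := Nat.floor_le hF0
  have hFp1 : F ≤ (p:ℝ) + 1 := by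
    rcases le_total (Nat.floor F) (n-1) with h | h
    · have hpeq : p = Nat.floor F := by rw [hpdef]; omega
      rw [hpeq]
      exact (Nat.lt_floor_add_one F).le
    · have hpeq : p = n - 1 := by rw [hpdef]; omega
      have hcast : ((n:ℕ) - 1 : ℕ) = (N - 1 : ℝ) := by
        rw [hNdef]; push_cast [Nat.cast_sub (by omega : 1 ≤ n)]; ring
      have hFN : F ≤ N := by
        rw [hFdef, div_le_iff₀ hm2m1pos]
        nlinarith
      rw [hpeq, hcast]
      linarith
  have hple : (p:ℝ) * (m2 - m1) ≤ N * m2 := by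
    have := (le_div_iff₀ hm2m1pos).mp hpF
    linarith [this]
  have hpge : N * m2 ≤ ((p:ℝ)+1) * (m2 - m1) := by
    have := (div_le_iff₀ hm2m1pos).mp hFp1
    linarith [this]
  clear_value p F sd m1 m2
  clear hpdef hpF hFp1 hF0 hFdef hsddef hm1def hm2def F
  -- the balancing value r
  set r : ℝ := -((p:ℝ)*m1 + (N-1-(p:ℝ))*m2) with hrdef
  clear_value r
  have hr2 : r ≤ m2 := by rw [hrdef]; linarith [hple, hm2pos]
  have hr1 : m1 ≤ r := by rw [hrdef]; linarith [hpge]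
  -- T bound
  set T : ℝ := (p:ℝ)*m1^2 + (N-1-(p:ℝ))*m2^2 + r^2 with hTdef
  clear_value T
  have hTid : T = -(N*(m1*m2)) - (r - m1)*(m2 - r) := by
    rw [hTdef, hrdef]; ring
  have he4 : 4*((r-m1)*(m2-r)) ≤ (m2-m1)^2 := by nlinarith [sq_nonneg (m1 + m2 - 2*r)]
  have he6 : b2^2 * (4*((r-m1)*(m2-r))) ≤ b2^2*(m2-m1)^2 :=
    mul_le_mul_of_nonneg_left he4 (sq_nonneg b2)
  have he7 : b2^2 * ((r-m1)*(m2-r)) ≤ disc := by nlinarith [he6, he5]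
  have hdisc_le : disc ≤ b2 := by nlinarith [hcs]
  have he8 : b2 * ((r-m1)*(m2-r)) ≤ 1 := by nlinarith [he7, hdisc_le, hb2pos]
  have hmain : b2 * (N - T) ≤ 1 := by
    have hx : b2 * (N - T) = b2*N + N*(b2*(m1*m2)) + b2*((r-m1)*(m2-r)) := by
      rw [hTid]; ring
    rw [hx, he1]
    have h9 : N * (a2 - 1) + b2 * N ≤ 0 := by nlinarith
    linarith [he8, h9]
  have hfinal : N - T ≤ 1/b2 := by
    rw [le_div_iff₀ hb2pos]
    linarith [hmain, mul_comm b2 (N - T)]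
  have hadm : ∀ g, m1 ≤ g → g ≤ m2 → a2 - 2*g*cq + g^2*b2 ≤ 1 := by
    intro g hg1 hg2
    have h1 : 0 ≤ b2*(g - m1) := mul_nonneg hb2pos.le (by linarith)
    have h2 : g - m2 ≤ 0 := by linarith
    have h3 : b2*(g-m1)*(g-m2) ≤ 0 := mul_nonpos_of_nonneg_of_nonpos h1 h2
    linarith [hfact g, h3]
  rw [hTdef] at hfinal
  rw [hrdef] at hr1 hr2 hfinal
  exact ⟨m1, m2, p, hpn, by linarith, hr1, hr2, hadm, hfinal⟩

set_option maxHeartbeats 1000000 in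
theorem stmt_13 (n d : ℕ) (hn : 2 ≤ n) (hd : 1 ≤ d)
    (A0 : ℝ) (A B : Fin d → ℝ)
    (hQ : ∀ x : Fin n → Fin d → ℝ, (∀ i, ∑ α, (x i α) ^ 2 ≤ 1) →
      0 ≤ Qpoly n d A0 A B x) :
    ∀ X Y : Fin d → ℝ,
      (∑ α, (Y α) ^ 2) + (∑ α, (X α) ^ 2) / n ≤ 1 →
      0 ≤ PQ n d A0 A B X Y + A0 / ((n : ℝ) - 1) := by
  intro X Y hXY
  have hN2 : (2:ℝ) ≤ (n:ℝ) := by exact_mod_cast hn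
  have hNpos : (0:ℝ) < (n:ℝ) := by linarith
  have hN1 : (0:ℝ) < (n:ℝ) - 1 := by linarith
  have hspos : (0:ℝ) < Real.sqrt (n:ℝ) := Real.sqrt_pos.mpr hNpos
  have hs2 : Real.sqrt (n:ℝ) ^ 2 = (n:ℝ) := Real.sq_sqrt hNpos.le
  -- the sign-adjusted Y
  set v : Fin d → ℝ := fun α => (if 0 ≤ X α * Y α then (-1:ℝ) else 1) * Y α with hvdef
  have hv : ∀ α, (v α)^2 = (Y α)^2 := by
    intro α; simp only [hvdef]; split_ifs <;> ring
  have hxv : ∀ α, X α * v α = -|X α * Y α| := by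
    intro α; simp only [hvdef]; split_ifs with h
    · rw [abs_of_nonneg h]; ring
    · rw [abs_of_neg (lt_of_not_ge h)]; ring
  set SX : ℝ := ∑ α, (X α)^2 with hSXdef
  set b2 : ℝ := ∑ α, (Y α)^2 with hb2def
  set cp : ℝ := ∑ α, |X α * Y α| with hcpdef
  have hSX0 : 0 ≤ SX := Finset.sum_nonneg (fun α _ => sq_nonneg _)
  have hb20 : 0 ≤ b2 := Finset.sum_nonneg (fun α _ => sq_nonneg _)
  have hcp0 : 0 ≤ cp := Finset.sum_nonneg (fun α _ => abs_nonneg _)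
  have hcs : cp^2 ≤ SX * b2 := by
    have h := Finset.sum_mul_sq_le_sq_mul_sq Finset.univ (fun α => |X α|) (fun α => |Y α|)
    simp only [← abs_mul, sq_abs] at h
    exact h
  have hcon : b2 + SX / (n:ℝ) ≤ 1 := hXY
  set R : ℝ := ∑ α, B α * (Y α)^2 with hRdef
  set L : ℝ := Real.sqrt (n:ℝ) * ∑ α, A α * X α with hLdef
  set P : ℝ := ((n:ℝ) - 1) * ∑ α, B α * (X α)^2 with hPdef
  have hPQ : PQ n d A0 A B X Y = A0 + L + P - (n:ℝ) * R := by
    rw [PQ]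
  -- A0 ≥ 0
  have hA0 : 0 ≤ A0 := by
    have hadm : ∀ i : Fin n, ∑ α, (((0:ℝ)) * X α / Real.sqrt (n:ℝ)
        + (fun _ : Fin n => (0:ℝ)) i * v α)^2 ≤ 1 := by
      intro i
      rw [norm_config n d hn X Y v hv hxv 0 0]
      norm_num
    have h := hQ _ hadm
    rw [eval_config n d hn A0 A B X Y v hv 0 (fun _ => 0) (by simp)] at h
    simp at h
    linarith
  have hA0div : 0 ≤ A0 / ((n:ℝ) - 1) := div_nonneg hA0 hN1.le
  rcases le_or_gt R 0 with hR | hR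
  · -- case R ≤ 0 : configuration lam = 1, γ = 0
    have hadm : ∀ i : Fin n, ∑ α, (((1:ℝ)) * X α / Real.sqrt (n:ℝ)
        + (fun _ : Fin n => (0:ℝ)) i * v α)^2 ≤ 1 := by
      intro i
      rw [norm_config n d hn X Y v hv hxv 1 0]
      norm_num
      linarith
    have h := hQ _ hadm
    rw [eval_config n d hn A0 A B X Y v hv 1 (fun _ => 0) (by simp)] at h
    simp only [one_pow, one_mul] at h
    have hzero : (∑ i : Fin n, ((fun _ : Fin n => (0:ℝ)) i)^2) = 0 := by simp
    rw [hzero, zero_mul, sub_zero] at h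
    have hNR : (n:ℝ) * R ≤ 0 := mul_nonpos_of_nonneg_of_nonpos hNpos.le hR
    rw [hPQ]
    linarith
  · -- case R > 0
    have hb2pos : 0 < b2 := by
      rcases lt_or_eq_of_le hb20 with h | h
      · exact h
      · exfalso
        have hy : ∀ α ∈ Finset.univ, (Y α)^2 = 0 := by
          intro α _
          have := (Finset.sum_eq_zero_iff_of_nonneg (fun α _ => sq_nonneg (Y α))).mp h.symm
          exact this α (Finset.mem_univ α)
        have : R = 0 := by
          rw [hRdef]
          apply Finset.sum_eq_zero
          intro α hα
          rw [hy α hα, mul_zero]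
        linarith
    -- Configuration 1 : lam = 0, ±1/√b2 pattern ⇒ (n-1) R ≤ A0 b2
    set b : ℝ := Real.sqrt b2 with hbdef
    have hb : b^2 = b2 := Real.sq_sqrt hb20
    have hbpos : 0 < b := Real.sqrt_pos.mpr hb2pos
    have hbne : b ≠ 0 := ne_of_gt hbpos
    set γ1 : Fin n → ℝ := fun i =>
      if (i:ℕ) < n/2 then 1/b else if (i:ℕ) < 2*(n/2) then -(1/b) else 0 with hγ1def
    have hγ1sum : ∑ i, γ1 i = 0 := by
      simp only [hγ1def]
      rw [sum_piecewise n (n/2) (2*(n/2)) (by omega) (by omega) (1/b) (-(1/b)) 0]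
      have h1 : 2*(n/2) - n/2 = n/2 := by omega
      rw [h1]
      ring
    have hγ1sq : ∑ i, (γ1 i)^2 = (2*(n/2:ℕ) : ℝ) / b2 := by
      have hcong : ∀ i : Fin n, (γ1 i)^2
          = (if (i:ℕ) < n/2 then 1/b2 else if (i:ℕ) < 2*(n/2) then 1/b2 else 0) := by
        intro i
        simp only [hγ1def]
        split_ifs with h1 h2
        · rw [div_pow, one_pow, hb]
        · rw [neg_pow, div_pow, one_pow, hb]; ring
        · ring
      rw [Finset.sum_congr rfl (fun i _ => hcong i),
        sum_piecewise n (n/2) (2*(n/2)) (by omega) (by omega) (1/b2) (1/b2) 0]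
      have h1 : 2*(n/2) - n/2 = n/2 := by omega
      rw [h1]
      push_cast
      ring
    have hadm1 : ∀ i : Fin n, ∑ α, (((0:ℝ)) * X α / Real.sqrt (n:ℝ) + γ1 i * v α)^2 ≤ 1 := by
      intro i
      rw [norm_config n d hn X Y v hv hxv 0 (γ1 i)]
      have hval : (γ1 i)^2 * b2 ≤ 1 := by
        have hone : (1/b)^2 * b2 = 1 := by
          rw [div_pow, one_pow, hb]; field_simp
        simp only [hγ1def]
        split_ifs
        · rw [hone]
        · rw [neg_sq]; rw [hone]
        · norm_num
      norm_num
      linarith [hval]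
    have h1 := hQ _ hadm1
    rw [eval_config n d hn A0 A B X Y v hv 0 γ1 hγ1sum] at h1
    rw [hγ1sq] at h1
    have h1' : ((2*(n/2:ℕ) : ℝ)/b2)*R ≤ A0 := by linarith [h1]
    have hkey : ((n:ℝ) - 1) * R ≤ A0 * b2 := by
      have h2k : (n:ℝ) - 1 ≤ (2*(n/2:ℕ) : ℝ) := by
        have h5 : n ≤ 2*(n/2) + 1 := by omega
        have h6 := (Nat.cast_le (α := ℝ)).mpr h5
        push_cast at h6 ⊢
        linarith
      have hstep : (2*(n/2:ℕ) : ℝ) * R ≤ A0 * b2 := by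
        have h3 := mul_le_mul_of_nonneg_right h1' hb20
        have h4 : ((2*(n/2:ℕ) : ℝ)/b2)*R*b2 = (2*(n/2:ℕ) : ℝ)*R := by
          field_simp
        rw [h4] at h3
        exact h3
      have h2k' := mul_le_mul_of_nonneg_right h2k hR.le
      linarith [h2k', hstep]
    -- Configuration 2 : lam = 1, three-valued pattern
    have hcs' : (cp/Real.sqrt (n:ℝ))^2 ≤ (SX/(n:ℝ))*b2 := by
      rw [div_pow, hs2, div_le_iff₀ hNpos]
      calc cp^2 ≤ SX*b2 := hcs
        _ = SX/(n:ℝ)*b2*(n:ℝ) := by field_simp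
    obtain ⟨m1, m2, p, hpn, hm12, hr1, hr2, hadm2, hTb⟩ :=
      aux_config n hn (SX/(n:ℝ)) b2 (cp/Real.sqrt (n:ℝ)) hb2pos (by positivity)
        (by linarith [hcon]) (by positivity) hcs'
    set r : ℝ := -((p:ℝ)*m1 + ((n:ℝ)-1-(p:ℝ))*m2) with hrdef
    set γ2 : Fin n → ℝ := fun i =>
      if (i:ℕ) < p then m1 else if (i:ℕ) < n-1 then m2 else r with hγ2def
    have hc1 : ((n-1-p : ℕ) : ℝ) = (n:ℝ) - 1 - (p:ℝ) := by
      rw [Nat.cast_sub hpn, Nat.cast_sub (by omega : 1 ≤ n)]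
      push_cast
      ring
    have hc2 : ((n-(n-1) : ℕ) : ℝ) = 1 := by
      have : n - (n-1) = 1 := by omega
      rw [this, Nat.cast_one]
    have hγ2sum : ∑ i, γ2 i = 0 := by
      simp only [hγ2def]
      rw [sum_piecewise n p (n-1) hpn (by omega) m1 m2 r, hc1, hc2, hrdef]
      ring
    have hγ2sq : ∑ i, (γ2 i)^2
        = (p:ℝ)*m1^2 + ((n:ℝ)-1-(p:ℝ))*m2^2 + r^2 := by
      have hcong : ∀ i : Fin n, (γ2 i)^2
          = (if (i:ℕ) < p then m1^2 else if (i:ℕ) < n-1 then m2^2 else r^2) := by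
        intro i
        simp only [hγ2def]
        split_ifs <;> ring
      rw [Finset.sum_congr rfl (fun i _ => hcong i),
        sum_piecewise n p (n-1) hpn (by omega) (m1^2) (m2^2) (r^2), hc1, hc2]
      ring
    have hadm2' : ∀ i : Fin n, ∑ α, (((1:ℝ)) * X α / Real.sqrt (n:ℝ) + γ2 i * v α)^2 ≤ 1 := by
      intro i
      rw [norm_config n d hn X Y v hv hxv 1 (γ2 i)]
      have hg1 : m1 ≤ γ2 i := by
        simp only [hγ2def]
        split_ifs
        · exact le_refl m1
        · exact hm12
        · exact hr1
      have hg2 : γ2 i ≤ m2 := by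
        simp only [hγ2def]
        split_ifs
        · exact hm12
        · exact le_refl m2
        · exact hr2
      have := hadm2 (γ2 i) hg1 hg2
      have hrw : (1:ℝ)^2 * SX / (n:ℝ) - 2*1*(γ2 i)*cp/Real.sqrt (n:ℝ) + (γ2 i)^2 * b2
          = SX/(n:ℝ) - 2*(γ2 i)*(cp/Real.sqrt (n:ℝ)) + (γ2 i)^2*b2 := by
        ring
      rw [hrw]
      linarith [this]
    have h2 := hQ _ hadm2'
    rw [eval_config n d hn A0 A B X Y v hv 1 γ2 hγ2sum] at h2
    simp only [one_pow, one_mul] at h2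
    rw [hγ2sq, ← hLdef, ← hPdef, ← hRdef] at h2
    -- h2 : 0 ≤ A0 + L + P - T * R  with T = p m1² + (n-1-p) m2² + r²
    set T : ℝ := (p:ℝ)*m1^2 + ((n:ℝ)-1-(p:ℝ))*m2^2 + r^2 with hTdef
    have hTb' : (n:ℝ) - T ≤ 1/b2 := by
      rw [hTdef, hrdef]
      exact hTb
    clear_value T r γ2 γ1 b R L P cp b2 SX v
    rw [hPQ]
    rcases le_or_gt T (n:ℝ) with hc | hc
    · -- T ≤ n : pay the deficit with the slack
      have hd1 : ((n:ℝ) - T)*R ≤ (1/b2)*R :=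
        mul_le_mul_of_nonneg_right hTb' hR.le
      have hd2 : (1/b2)*R ≤ A0/((n:ℝ)-1) := by
        rw [one_div, inv_mul_eq_div, div_le_div_iff₀ hb2pos hN1]
        linarith [hkey]
      linarith [h2, hd1, hd2]
    · -- T > n
      have hd3 : 0 ≤ (T - (n:ℝ))*R := mul_nonneg (by linarith) hR.le
      linarith [h2, hd3, hA0div]
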